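/- The polynomial K(x,ρ) := Σ_{ι ≥ ρ} (-1)^{|ι|-1}(|ι|-1)! ∏_{C∈ι} (1-x)(1-2x)···(1-(|C|-1)x), where ρ is a set partition of [m] and the sum is over coarsenings ι of ρ, has vanishing coefficient of x^l for every l < |ρ| - 1. -/

import Mathlib

open Finset Polynomial

/-- `π` is a set partition of the finite type `α`. -/
def IsPartition {α : Type*} [Fintype α] (π : Finset (Finset α)) : Prop :=
  ∅ ∉ π ∧ ∀ x : α, ∃! B, B ∈ π ∧ x ∈ B

/-- `π` refines `σ`: every block of `π` is contained in some block of `σ`. -/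
def Refines {α : Type*} (π σ : Finset (Finset α)) : Prop :=
  ∀ B ∈ π, ∃ C ∈ σ, B ⊆ C

namespace S17

set_option linter.unusedSectionVars false

variable {α : Type*} [DecidableEq α]

/-- `pa n = (1-x)(1-2x)⋯(1-(n-1)x)`. -/
noncomputable def pa (n : ℕ) : Polynomial ℝ :=
  ∏ i ∈ Finset.range (n - 1), (1 - Polynomial.C ((i : ℝ) + 1) * Polynomial.X)

/-- falling factorial `y(y-1)⋯(y-k+1)` in the outer variable. -/
noncomputable def ff (k : ℕ) : Polynomial (Polynomial ℝ) :=
  ∏ i ∈ Finset.range k, (Polynomial.X - Polynomial.C (Polynomial.C (i : ℝ)))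

/-- `ι` is a partition of the finset `s`. -/
def PartOf (s : Finset α) (ι : Finset (Finset α)) : Prop :=
  ∅ ∉ ι ∧ (∀ C ∈ ι, C ⊆ s) ∧ (∀ C ∈ ι, ∀ D ∈ ι, C ≠ D → Disjoint C D) ∧
    ∀ x ∈ s, ∃ C ∈ ι, x ∈ C

/-- coarsenings of `ρ` among partitions of `s`. -/
noncomputable def coars (s : Finset α) (ρ : Finset (Finset α)) : Finset (Finset (Finset α)) :=
  @Finset.filter _ (fun ι => PartOf s ι ∧ Refines ρ ι) (Classical.decPred _) s.powerset.powerset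

noncomputable def W (ι : Finset (Finset α)) : Polynomial (Polynomial ℝ) :=
  ff ι.card * Polynomial.C (∏ C ∈ ι, pa C.card)

noncomputable def Q (s : Finset α) (ρ : Finset (Finset α)) : Polynomial (Polynomial ℝ) :=
  ∑ ι ∈ coars s ρ, W ι

/-- the block of `ι` containing `x` (junk if not unique). -/
def blk (ι : Finset (Finset α)) (x : α) : Finset α :=
  (ι.filter (fun C => x ∈ C)).sup id

lemma pa_succ (n : ℕ) : pa (n + 1) = pa n * (1 - Polynomial.C (n : ℝ) * Polynomial.X) := by
  cases n with
  | zero => simp [pa]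
  | succ k =>
    show (∏ i ∈ Finset.range (k + 1), _) = _
    rw [Finset.prod_range_succ]
    simp only [pa, Nat.add_sub_cancel]
    push_cast
    ring

lemma ff_succ (k : ℕ) :
    ff (k + 1) = ff k * (Polynomial.X - Polynomial.C (Polynomial.C (k : ℝ))) := by
  simp [ff, Finset.prod_range_succ]

lemma mem_coars {s : Finset α} {ρ ι : Finset (Finset α)} :
    ι ∈ coars s ρ ↔ PartOf s ι ∧ Refines ρ ι := by
  classical
  unfold coars
  rw [Finset.filter_congr_decidable, Finset.mem_filter, Finset.mem_powerset]
  constructor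
  · tauto
  · intro h
    refine ⟨?_, h⟩
    intro C hC
    rw [Finset.mem_powerset]
    exact h.1.2.1 C hC

lemma blk_eq {s : Finset α} {ι : Finset (Finset α)} (hι : PartOf s ι) {C : Finset α} {x : α}
    (hC : C ∈ ι) (hx : x ∈ C) : blk ι x = C := by
  have : ι.filter (fun D => x ∈ D) = {C} := by
    apply Finset.eq_singleton_iff_unique_mem.2
    refine ⟨Finset.mem_filter.2 ⟨hC, hx⟩, ?_⟩
    intro D hD
    rw [Finset.mem_filter] at hD
    by_contra hne
    exact (Finset.disjoint_left.1 (hι.2.2.1 D hD.1 C hC hne) hD.2) hx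
  rw [blk, this, Finset.sup_singleton, id]

lemma blk_mem {s : Finset α} {ι : Finset (Finset α)} (hι : PartOf s ι) {x : α} (hx : x ∈ s) :
    blk ι x ∈ ι ∧ x ∈ blk ι x := by
  obtain ⟨C, hC, hxC⟩ := hι.2.2.2 x hx
  rw [blk_eq hι hC hxC]
  exact ⟨hC, hxC⟩

lemma sum_card {s : Finset α} {ι : Finset (Finset α)} (hι : PartOf s ι) :
    ∑ C ∈ ι, C.card = s.card := by
  have hs : s = ι.biUnion (fun C => C) := by
    ext x
    simp only [Finset.mem_biUnion]
    constructor
    · intro hx; exact hι.2.2.2 x hx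
    · rintro ⟨C, hC, hxC⟩; exact hι.2.1 C hC hxC
  rw [hs, Finset.card_biUnion (fun C hC D hD hne => hι.2.2.1 C hC D hD hne)]

variable {s' : Finset α} {ι' ι : Finset (Finset α)} {v u : α} {C₀ bu b' : Finset α}
  {ρ' ρ'' : Finset (Finset α)}

lemma not_mem_block (hι' : PartOf s' ι') (hv : v ∉ s') {D : Finset α} (hD : D ∈ ι') : v ∉ D :=
  fun h => hv (hι'.2.1 D hD h)

lemma insert_block_not_mem (hι' : PartOf s' ι') (hv : v ∉ s') {t : Finset (Finset α)}
    (ht : t ⊆ ι') : insert v C₀ ∉ t :=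
  fun h => (not_mem_block hι' hv (ht h)) (Finset.mem_insert_self v C₀)

lemma up_part (hι' : PartOf s' ι') (hv : v ∉ s') (hC₀ : C₀ ∈ ι') :
    PartOf (insert v s') (insert (insert v C₀) (ι'.erase C₀)) := by
  obtain ⟨hne, hsub, hdisj, hcov⟩ := hι'
  have hι'' : PartOf s' ι' := ⟨hne, hsub, hdisj, hcov⟩
  refine ⟨?_, ?_, ?_, ?_⟩
  · intro h
    rcases Finset.mem_insert.1 h with h | h
    · exact (Finset.insert_ne_empty v C₀) h.symm
    · exact hne (Finset.mem_of_mem_erase h)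
  · intro C hC
    rcases Finset.mem_insert.1 hC with rfl | h
    · exact Finset.insert_subset_insert v (hsub _ hC₀)
    · exact (hsub _ (Finset.mem_of_mem_erase h)).trans (Finset.subset_insert v s')
  · intro C hC D hD hne'
    rcases Finset.mem_insert.1 hC with rfl | hC'
    · rcases Finset.mem_insert.1 hD with rfl | hD'
      · exact absurd rfl hne'
      · rw [Finset.disjoint_insert_left]
        exact ⟨not_mem_block hι'' hv (Finset.mem_of_mem_erase hD'),
          hdisj _ hC₀ _ (Finset.mem_of_mem_erase hD') (Finset.ne_of_mem_erase hD').symm⟩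
    · rcases Finset.mem_insert.1 hD with rfl | hD'
      · rw [Finset.disjoint_insert_right]
        exact ⟨not_mem_block hι'' hv (Finset.mem_of_mem_erase hC'),
          hdisj _ (Finset.mem_of_mem_erase hC') _ hC₀ (Finset.ne_of_mem_erase hC')⟩
      · exact hdisj _ (Finset.mem_of_mem_erase hC') _ (Finset.mem_of_mem_erase hD') hne'
  · intro x hx
    rcases Finset.mem_insert.1 hx with rfl | hx'
    · exact ⟨insert x C₀, Finset.mem_insert_self _ _, Finset.mem_insert_self _ _⟩
    · obtain ⟨C, hC, hxC⟩ := hcov x hx'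
      by_cases hCC : C = C₀
      · subst hCC
        exact ⟨insert v C, Finset.mem_insert_self _ _, Finset.mem_insert_of_mem hxC⟩
      · exact ⟨C, Finset.mem_insert_of_mem (Finset.mem_erase.2 ⟨hCC, hC⟩), hxC⟩


lemma down_facts (hι : PartOf (insert v s') ι) (hv : v ∉ s') (hne : blk ι v ≠ {v}) :
    PartOf s' (insert ((blk ι v).erase v) (ι.erase (blk ι v))) ∧
      ((blk ι v).erase v ∉ ι.erase (blk ι v)) ∧ ((blk ι v).erase v).Nonempty := by
  have hvs : v ∈ insert v s' := Finset.mem_insert_self v s'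
  obtain ⟨hBv, hvBv⟩ := blk_mem hι hvs
  set Bv := blk ι v with hBvdef
  set Bv' := Bv.erase v with hBv'def
  have hBv'ne : Bv'.Nonempty := by
    rcases Finset.eq_empty_or_nonempty Bv' with h | h
    · exfalso
      apply hne
      apply Finset.eq_singleton_iff_unique_mem.2
      refine ⟨hvBv, fun y hy => ?_⟩
      by_contra hyv
      exact (Finset.notMem_empty y) (h ▸ Finset.mem_erase.2 ⟨hyv, hy⟩)
    · exact h
  have hBv'sub : Bv' ⊆ s' := by
    intro x hx
    have hx1 := Finset.mem_erase.1 hx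
    have := hι.2.1 Bv hBv hx1.2
    rcases Finset.mem_insert.1 this with h | h
    · exact absurd h hx1.1
    · exact h
  have hvnotC : ∀ C ∈ ι.erase Bv, v ∉ C := by
    intro C hC hvC
    exact (Finset.mem_erase.1 hC).1 (blk_eq hι (Finset.mem_of_mem_erase hC) hvC ▸ rfl)
  have hBv'notmem : Bv' ∉ ι.erase Bv := by
    intro h
    have hmem := Finset.mem_of_mem_erase h
    have hne2 : Bv' ≠ Bv := by
      intro hh
      have : v ∈ Bv' := hh.symm ▸ hvBv
      exact (Finset.notMem_erase v Bv) this
    have hdis := hι.2.2.1 _ hmem _ hBv hne2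
    obtain ⟨y, hy⟩ := hBv'ne
    exact (Finset.disjoint_left.1 hdis hy) (Finset.mem_of_mem_erase hy)
  refine ⟨⟨?_, ?_, ?_, ?_⟩, hBv'notmem, hBv'ne⟩
  · intro h
    rcases Finset.mem_insert.1 h with h | h
    · exact hBv'ne.ne_empty h.symm
    · exact hι.1 (Finset.mem_of_mem_erase h)
  · intro C hC
    rcases Finset.mem_insert.1 hC with rfl | h
    · exact hBv'sub
    · intro x hx
      have := hι.2.1 C (Finset.mem_of_mem_erase h) hx
      rcases Finset.mem_insert.1 this with rfl | hh
      · exact absurd hx (hvnotC C h)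
      · exact hh
  · intro C hC D hD hne'
    rcases Finset.mem_insert.1 hC with rfl | hC'
    · rcases Finset.mem_insert.1 hD with rfl | hD'
      · exact absurd rfl hne'
      · have hDne : Bv ≠ D := fun hh => (Finset.mem_erase.1 hD').1 hh.symm
        exact Finset.disjoint_of_subset_left (Finset.erase_subset v Bv)
          (hι.2.2.1 _ hBv _ (Finset.mem_of_mem_erase hD') hDne)
    · rcases Finset.mem_insert.1 hD with rfl | hD'
      · have hCne : Bv ≠ C := fun hh => (Finset.mem_erase.1 hC').1 hh.symm
        exact Finset.disjoint_of_subset_right (Finset.erase_subset v Bv)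
          (hι.2.2.1 _ (Finset.mem_of_mem_erase hC') _ hBv (fun h => hCne h.symm))
      · exact hι.2.2.1 _ (Finset.mem_of_mem_erase hC') _ (Finset.mem_of_mem_erase hD') hne'
  · intro x hx
    have hxs : x ∈ insert v s' := Finset.mem_insert_of_mem hx
    obtain ⟨C, hC, hxC⟩ := hι.2.2.2 x hxs
    by_cases hCC : C = Bv
    · subst hCC
      refine ⟨Bv', Finset.mem_insert_self _ _, Finset.mem_erase.2 ⟨fun h => ?_, hxC⟩⟩
      exact hv (h ▸ hx)
    · exact ⟨C, Finset.mem_insert_of_mem (Finset.mem_erase.2 ⟨hCC, hC⟩), hxC⟩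


lemma up_down (hι' : PartOf s' ι') (hv : v ∉ s') (hC₀ : C₀ ∈ ι') :
    blk (insert (insert v C₀) (ι'.erase C₀)) v = insert v C₀ ∧
    insert ((blk (insert (insert v C₀) (ι'.erase C₀)) v).erase v)
      ((insert (insert v C₀) (ι'.erase C₀)).erase
        (blk (insert (insert v C₀) (ι'.erase C₀)) v)) = ι' := by
  have hvC₀ : v ∉ C₀ := not_mem_block hι' hv hC₀
  have hni : insert v C₀ ∉ ι'.erase C₀ :=
    insert_block_not_mem hι' hv (Finset.erase_subset C₀ ι')
  have h1 : blk (insert (insert v C₀) (ι'.erase C₀)) v = insert v C₀ :=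
    blk_eq (up_part hι' hv hC₀) (Finset.mem_insert_self _ _) (Finset.mem_insert_self v C₀)
  refine ⟨h1, ?_⟩
  rw [h1, Finset.erase_insert hvC₀, Finset.erase_insert hni, Finset.insert_erase hC₀]

lemma down_up (hι : PartOf (insert v s') ι) (hv : v ∉ s') (hne : blk ι v ≠ {v}) :
    insert (insert v ((blk ι v).erase v))
      ((insert ((blk ι v).erase v) (ι.erase (blk ι v))).erase ((blk ι v).erase v)) = ι := by
  obtain ⟨hpart, hnm, hne'⟩ := down_facts hι hv hne
  obtain ⟨hBv, hvBv⟩ := blk_mem hι (Finset.mem_insert_self v s')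
  rw [Finset.erase_insert hnm, Finset.insert_erase hvBv, Finset.insert_erase hBv]

lemma W_up (hι' : PartOf s' ι') (hv : v ∉ s') (hC₀ : C₀ ∈ ι') :
    W (insert (insert v C₀) (ι'.erase C₀)) =
      W ι' * Polynomial.C (1 - Polynomial.C ((C₀.card : ℝ)) * Polynomial.X) := by
  have hvC₀ : v ∉ C₀ := not_mem_block hι' hv hC₀
  have hni : insert v C₀ ∉ ι'.erase C₀ :=
    insert_block_not_mem hι' hv (Finset.erase_subset C₀ ι')
  unfold W
  rw [Finset.card_insert_of_notMem hni, Finset.card_erase_add_one hC₀,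
    Finset.prod_insert hni, Finset.card_insert_of_notMem hvC₀, pa_succ,
    ← Finset.mul_prod_erase ι' (fun C => pa C.card) hC₀]
  simp only [map_mul]
  ring

lemma W_singleton_up (hι' : PartOf s' ι') (hv : v ∉ s') :
    W (insert {v} ι') = (Polynomial.X - Polynomial.C (Polynomial.C ((ι'.card : ℝ)))) * W ι' := by
  have hni : ({v} : Finset α) ∉ ι' := by
    intro h
    exact hv (hι'.2.1 _ h (Finset.mem_singleton_self v))
  unfold W
  rw [Finset.card_insert_of_notMem hni, ff_succ, Finset.prod_insert hni]
  have h1 : pa ({v} : Finset α).card = 1 := by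
    simp [pa]
  rw [h1, one_mul]
  ring

lemma erase_singleton_part (hρ : PartOf (insert v s') ρ') (hv : v ∉ s') (hmem : {v} ∈ ρ') :
    PartOf s' (ρ'.erase {v}) := by
  refine ⟨fun h => hρ.1 (Finset.mem_of_mem_erase h), ?_, ?_, ?_⟩
  · intro C hC x hx
    have hCρ := Finset.mem_of_mem_erase hC
    have h2 := hρ.2.1 C hCρ hx
    rcases Finset.mem_insert.1 h2 with rfl | h
    · exfalso
      have hne := (Finset.mem_erase.1 hC).1
      have hdis := hρ.2.2.1 C hCρ {x} hmem hne
      exact (Finset.disjoint_left.1 hdis hx) (Finset.mem_singleton_self x)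
    · exact h
  · intro C hC D hD hne
    exact hρ.2.2.1 C (Finset.mem_of_mem_erase hC) D (Finset.mem_of_mem_erase hD) hne
  · intro x hx
    obtain ⟨C, hC, hxC⟩ := hρ.2.2.2 x (Finset.mem_insert_of_mem hx)
    refine ⟨C, Finset.mem_erase.2 ⟨?_, hC⟩, hxC⟩
    rintro rfl
    exact hv ((Finset.mem_singleton.1 hxC) ▸ hx)

lemma merge_part (hρ' : PartOf s' (insert bu ρ'')) (hbu : bu ∉ ρ'') (hb' : b' ∈ ρ'')
    (hune : bu.Nonempty) :
    PartOf s' (insert (bu ∪ b') (ρ''.erase b')) ∧ bu ∪ b' ∉ ρ''.erase b' := by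
  have hbub' : bu ≠ b' := fun h => hbu (h ▸ hb')
  have hmem_bu : bu ∈ insert bu ρ'' := Finset.mem_insert_self _ _
  have hmem_b' : b' ∈ insert bu ρ'' := Finset.mem_insert_of_mem hb'
  obtain ⟨y, hy⟩ := hune
  have hnm : bu ∪ b' ∉ ρ''.erase b' := by
    intro h
    have hb'' := Finset.mem_of_mem_erase h
    have hne : bu ∪ b' ≠ bu := fun hh => hbu (hh ▸ hb'')
    have hdis := hρ'.2.2.1 (bu ∪ b') (Finset.mem_insert_of_mem hb'') bu hmem_bu hne
    exact (Finset.disjoint_left.1 hdis (Finset.mem_union_left _ hy)) hy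
  refine ⟨⟨?_, ?_, ?_, ?_⟩, hnm⟩
  · intro h
    rcases Finset.mem_insert.1 h with h | h
    · exact Finset.notMem_empty y (h ▸ (Finset.mem_union_left _ hy) : y ∈ (∅ : Finset α))
    · exact hρ'.1 (Finset.mem_insert_of_mem (Finset.mem_of_mem_erase h))
  · intro C hC
    rcases Finset.mem_insert.1 hC with rfl | h
    · exact Finset.union_subset (hρ'.2.1 bu hmem_bu) (hρ'.2.1 b' hmem_b')
    · exact hρ'.2.1 C (Finset.mem_insert_of_mem (Finset.mem_of_mem_erase h))
  · intro C hC D hD hne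
    have hdisj := hρ'.2.2.1
    rcases Finset.mem_insert.1 hC with rfl | hC'
    · rcases Finset.mem_insert.1 hD with rfl | hD'
      · exact absurd rfl hne
      · have hDρ : D ∈ insert bu ρ'' := Finset.mem_insert_of_mem (Finset.mem_of_mem_erase hD')
        have hDbu : bu ≠ D := fun hh => hbu (hh ▸ (Finset.mem_of_mem_erase hD'))
        have hDb' : b' ≠ D := fun hh => (Finset.mem_erase.1 hD').1 hh.symm
        rw [Finset.disjoint_union_left]
        exact ⟨hdisj bu hmem_bu D hDρ hDbu, hdisj b' hmem_b' D hDρ hDb'⟩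
    · rcases Finset.mem_insert.1 hD with rfl | hD'
      · have hCρ : C ∈ insert bu ρ'' := Finset.mem_insert_of_mem (Finset.mem_of_mem_erase hC')
        have hCbu : bu ≠ C := fun hh => hbu (hh ▸ (Finset.mem_of_mem_erase hC'))
        have hCb' : b' ≠ C := fun hh => (Finset.mem_erase.1 hC').1 hh.symm
        rw [Finset.disjoint_union_right]
        exact ⟨(hdisj bu hmem_bu C hCρ hCbu).symm, (hdisj b' hmem_b' C hCρ hCb').symm⟩
      · exact hdisj C (Finset.mem_insert_of_mem (Finset.mem_of_mem_erase hC'))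
          D (Finset.mem_insert_of_mem (Finset.mem_of_mem_erase hD')) hne
  · intro x hx
    obtain ⟨C, hC, hxC⟩ := hρ'.2.2.2 x hx
    rcases Finset.mem_insert.1 hC with h | hC'
    · exact ⟨bu ∪ b', Finset.mem_insert_self _ _,
        Finset.mem_union_left _ (h ▸ hxC)⟩
    · by_cases h : C = b'
      · exact ⟨bu ∪ b', Finset.mem_insert_self _ _, Finset.mem_union_right _ (h ▸ hxC)⟩
      · exact ⟨C, Finset.mem_insert_of_mem (Finset.mem_erase.2 ⟨h, hC'⟩), hxC⟩

lemma blk_card_decomp (hρ' : PartOf s' ρ') (hι' : PartOf s' ι') (href : Refines ρ' ι')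
    (hu : u ∈ s') :
    ((blk ι' u).card : ℝ) = ∑ b' ∈ ρ', if b' ⊆ blk ι' u then (b'.card : ℝ) else 0 := by
  obtain ⟨hBumem, huBu⟩ := blk_mem hι' hu
  have hdec : blk ι' u = (ρ'.filter (fun b => b ⊆ blk ι' u)).biUnion (fun b => b) := by
    ext x
    simp only [Finset.mem_biUnion, Finset.mem_filter]
    constructor
    · intro hx
      have hxs : x ∈ s' := hι'.2.1 _ hBumem hx
      obtain ⟨bx, hbx, hxbx⟩ := hρ'.2.2.2 x hxs
      obtain ⟨C, hC, hbxC⟩ := href bx hbx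
      have hCBu : C = blk ι' u := by
        have h1 : blk ι' x = C := blk_eq hι' hC (hbxC hxbx)
        have h2 : blk ι' x = blk ι' u := blk_eq hι' hBumem hx
        rw [← h1, h2]
      exact ⟨bx, ⟨hbx, hCBu ▸ hbxC⟩, hxbx⟩
    · rintro ⟨b, ⟨hb, hbsub⟩, hxb⟩
      exact hbsub hxb
  have hcard : (blk ι' u).card = ∑ b ∈ ρ'.filter (fun b => b ⊆ blk ι' u), b.card := by
    conv_lhs => rw [hdec]
    exact Finset.card_biUnion (fun C hC D hD hne =>
      hρ'.2.2.1 C (Finset.mem_filter.1 hC).1 D (Finset.mem_filter.1 hD).1 hne)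
  rw [hcard, ← Finset.sum_filter]
  push_cast
  rfl

lemma filter_bu (hρ' : PartOf s' (insert bu ρ'')) (hu : u ∈ bu) :
    (coars s' (insert bu ρ'')).filter (fun ι' => bu ⊆ blk ι' u) = coars s' (insert bu ρ'') := by
  apply Finset.filter_true_of_mem
  intro ι' hmem
  rw [mem_coars] at hmem
  obtain ⟨C, hC, hbuC⟩ := hmem.2 bu (Finset.mem_insert_self _ _)
  rw [blk_eq hmem.1 hC (hbuC hu)]
  exact hbuC

lemma filter_merge (hρ' : PartOf s' (insert bu ρ'')) (hbu : bu ∉ ρ'') (hu : u ∈ bu)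
    (hb' : b' ∈ ρ'') :
    (coars s' (insert bu ρ'')).filter (fun ι' => b' ⊆ blk ι' u) =
      coars s' (insert (bu ∪ b') (ρ''.erase b')) := by
  have hu_s' : u ∈ s' := hρ'.2.1 bu (Finset.mem_insert_self _ _) hu
  ext ι'
  rw [Finset.mem_filter, mem_coars, mem_coars]
  constructor
  · rintro ⟨⟨hpart, href⟩, hsub⟩
    refine ⟨hpart, ?_⟩
    intro b'' hb''
    rcases Finset.mem_insert.1 hb'' with rfl | hb''2
    · refine ⟨blk ι' u, (blk_mem hpart hu_s').1, Finset.union_subset ?_ hsub⟩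
      obtain ⟨C, hC, hbuC⟩ := href bu (Finset.mem_insert_self _ _)
      rwa [blk_eq hpart hC (hbuC hu)]
    · exact href b'' (Finset.mem_insert_of_mem (Finset.mem_of_mem_erase hb''2))
  · rintro ⟨hpart, href⟩
    obtain ⟨C, hC, hunionC⟩ := href (bu ∪ b') (Finset.mem_insert_self _ _)
    have hCeq : C = blk ι' u := (blk_eq hpart hC (hunionC (Finset.mem_union_left _ hu))).symm
    refine ⟨⟨hpart, ?_⟩, hCeq ▸ ((Finset.subset_union_right).trans hunionC)⟩
    intro b'' hb''
    rcases Finset.mem_insert.1 hb'' with rfl | hb''2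
    · exact ⟨C, hC, (Finset.subset_union_left).trans hunionC⟩
    · by_cases h : b'' = b'
      · subst h
        exact ⟨C, hC, (Finset.subset_union_right).trans hunionC⟩
      · exact href b'' (Finset.mem_insert_of_mem (Finset.mem_erase.2 ⟨h, hb''2⟩))

lemma singleton_up_part (hι' : PartOf s' ι') (hv : v ∉ s') :
    PartOf (insert v s') (insert {v} ι') := by
  refine ⟨?_, ?_, ?_, ?_⟩
  · intro h
    rcases Finset.mem_insert.1 h with h | h
    · exact (Finset.singleton_ne_empty v) h.symm
    · exact hι'.1 h
  · intro C hC
    rcases Finset.mem_insert.1 hC with rfl | h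
    · exact Finset.singleton_subset_iff.2 (Finset.mem_insert_self v s')
    · exact (hι'.2.1 C h).trans (Finset.subset_insert v s')
  · intro C hC D hD hne
    rcases Finset.mem_insert.1 hC with rfl | hC'
    · rcases Finset.mem_insert.1 hD with rfl | hD'
      · exact absurd rfl hne
      · exact Finset.disjoint_singleton_left.2 (not_mem_block hι' hv hD')
    · rcases Finset.mem_insert.1 hD with rfl | hD'
      · exact Finset.disjoint_singleton_right.2 (not_mem_block hι' hv hC')
      · exact hι'.2.2.1 C hC' D hD' hne
  · intro x hx
    rcases Finset.mem_insert.1 hx with rfl | hx'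
    · exact ⟨{x}, Finset.mem_insert_self _ _, Finset.mem_singleton_self x⟩
    · obtain ⟨C, hC, hxC⟩ := hι'.2.2.2 x hx'
      exact ⟨C, Finset.mem_insert_of_mem hC, hxC⟩

lemma stepA (hv : v ∉ s') (hρ' : PartOf s' (insert bu ρ'')) (hbu : bu ∉ ρ'') (hu : u ∈ bu) :
    Q (insert v s') (insert (insert v bu) ρ'') =
      ∑ ι' ∈ coars s' (insert bu ρ''),
        W ι' * Polynomial.C (1 - Polynomial.C (((blk ι' u).card : ℝ)) * Polynomial.X) := by
  have hbumem : bu ∈ insert bu ρ'' := Finset.mem_insert_self _ _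
  have hu_s' : u ∈ s' := hρ'.2.1 bu hbumem hu
  have huv : u ≠ v := fun h => hv (h ▸ hu_s')
  have hvbu : v ∉ bu := fun h => hv (hρ'.2.1 bu hbumem h)
  have src : ∀ ι ∈ coars (insert v s') (insert (insert v bu) ρ''),
      PartOf (insert v s') ι ∧ insert v bu ⊆ blk ι v ∧ blk ι v ≠ {v} := by
    intro ι hι
    rw [mem_coars] at hι
    obtain ⟨hpart, href⟩ := hι
    obtain ⟨C, hC, hsubC⟩ := href (insert v bu) (Finset.mem_insert_self _ _)
    have hCblk : C = blk ι v := (blk_eq hpart hC (hsubC (Finset.mem_insert_self v bu))).symm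
    have hsub : insert v bu ⊆ blk ι v := hCblk ▸ hsubC
    refine ⟨hpart, hsub, fun h => huv ?_⟩
    have h2 : u ∈ blk ι v := hsub (Finset.mem_insert_of_mem hu)
    rw [h, Finset.mem_singleton] at h2
    exact h2
  have tgt : ∀ ι' ∈ coars s' (insert bu ρ''),
      PartOf s' ι' ∧ blk ι' u ∈ ι' ∧ u ∈ blk ι' u ∧ bu ⊆ blk ι' u := by
    intro ι' hι'
    rw [mem_coars] at hι'
    obtain ⟨hpart, href⟩ := hι'
    obtain ⟨hBu, huBu⟩ := blk_mem hpart hu_s'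
    obtain ⟨C, hC, hbuC⟩ := href bu hbumem
    have hCeq : C = blk ι' u := (blk_eq hpart hC (hbuC hu)).symm
    exact ⟨hpart, hBu, huBu, hCeq ▸ hbuC⟩
  have dmem : ∀ ι ∈ coars (insert v s') (insert (insert v bu) ρ''),
      insert ((blk ι v).erase v) (ι.erase (blk ι v)) ∈ coars s' (insert bu ρ'') := by
    intro ι hι
    obtain ⟨hpart, hsub, hne⟩ := src ι hι
    obtain ⟨hdpart, hnm, hne'⟩ := down_facts hpart hv hne
    rw [mem_coars] at hι ⊢
    refine ⟨hdpart, ?_⟩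
    intro b'' hb''
    rcases Finset.mem_insert.1 hb'' with rfl | hb''2
    · exact ⟨(blk ι v).erase v, Finset.mem_insert_self _ _,
        Finset.subset_erase.2 ⟨((Finset.subset_insert v b'').trans hsub), hvbu⟩⟩
    · obtain ⟨C, hC, hsubC⟩ := hι.2 b'' (Finset.mem_insert_of_mem hb''2)
      have hvb'' : v ∉ b'' := fun h => hv (hρ'.2.1 b'' (Finset.mem_insert_of_mem hb''2) h)
      by_cases hCC : C = blk ι v
      · exact ⟨(blk ι v).erase v, Finset.mem_insert_self _ _,
          Finset.subset_erase.2 ⟨hCC ▸ hsubC, hvb''⟩⟩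
      · exact ⟨C, Finset.mem_insert_of_mem (Finset.mem_erase.2 ⟨hCC, hC⟩), hsubC⟩
  have jmem : ∀ ι' ∈ coars s' (insert bu ρ''),
      insert (insert v (blk ι' u)) (ι'.erase (blk ι' u)) ∈
        coars (insert v s') (insert (insert v bu) ρ'') := by
    intro ι' hι'
    obtain ⟨hpart, hBu, huBu, hbuBu⟩ := tgt ι' hι'
    rw [mem_coars] at hι' ⊢
    refine ⟨up_part hpart hv hBu, ?_⟩
    intro b'' hb''
    rcases Finset.mem_insert.1 hb'' with rfl | hb''2
    · exact ⟨insert v (blk ι' u), Finset.mem_insert_self _ _,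
        Finset.insert_subset_insert v hbuBu⟩
    · obtain ⟨C, hC, hsubC⟩ := hι'.2 b'' (Finset.mem_insert_of_mem hb''2)
      by_cases hCC : C = blk ι' u
      · exact ⟨insert v (blk ι' u), Finset.mem_insert_self _ _,
          (hCC ▸ hsubC).trans (Finset.subset_insert _ _)⟩
      · exact ⟨C, Finset.mem_insert_of_mem (Finset.mem_erase.2 ⟨hCC, hC⟩), hsubC⟩
  refine Finset.sum_nbij' (fun ι => insert ((blk ι v).erase v) (ι.erase (blk ι v)))
    (fun ι' => insert (insert v (blk ι' u)) (ι'.erase (blk ι' u))) dmem jmem ?_ ?_ ?_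
  · intro ι hι
    obtain ⟨hpart, hsub, hne⟩ := src ι hι
    obtain ⟨hdpart, hnm, hne'⟩ := down_facts hpart hv hne
    have hblk : blk (insert ((blk ι v).erase v) (ι.erase (blk ι v))) u = (blk ι v).erase v :=
      blk_eq hdpart (Finset.mem_insert_self _ _)
        (Finset.mem_erase.2 ⟨huv, hsub (Finset.mem_insert_of_mem hu)⟩)
    rw [hblk]
    exact down_up hpart hv hne
  · intro ι' hι'
    obtain ⟨hpart, hBu, huBu, hbuBu⟩ := tgt ι' hι'
    exact (up_down hpart hv hBu).2
  · intro ι hι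
    obtain ⟨hpart, hsub, hne⟩ := src ι hι
    obtain ⟨hdpart, hnm, hne'⟩ := down_facts hpart hv hne
    have hblk : blk (insert ((blk ι v).erase v) (ι.erase (blk ι v))) u = (blk ι v).erase v :=
      blk_eq hdpart (Finset.mem_insert_self _ _)
        (Finset.mem_erase.2 ⟨huv, hsub (Finset.mem_insert_of_mem hu)⟩)
    have hinv : insert (insert v ((blk ι v).erase v))
        ((insert ((blk ι v).erase v) (ι.erase (blk ι v))).erase ((blk ι v).erase v)) = ι :=
      down_up hpart hv hne
    rw [hblk]
    conv_lhs => rw [← hinv]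
    exact W_up hdpart hv (Finset.mem_insert_self _ _)

lemma case1 (hv : v ∉ s') (hρ' : PartOf s' (insert bu ρ'')) (hbu : bu ∉ ρ'') (hu : u ∈ bu) :
    Q (insert v s') (insert (insert v bu) ρ'') =
      Q s' (insert bu ρ'') -
        (Polynomial.C (Polynomial.C ((bu.card : ℝ)) * Polynomial.X) * Q s' (insert bu ρ'') +
          ∑ b' ∈ ρ'', Polynomial.C (Polynomial.C ((b'.card : ℝ)) * Polynomial.X) *
            Q s' (insert (bu ∪ b') (ρ''.erase b'))) := by
  classical
  have hu_s' : u ∈ s' := hρ'.2.1 bu (Finset.mem_insert_self _ _) hu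
  rw [stepA hv hρ' hbu hu]
  have hexp : ∀ ι' ∈ coars s' (insert bu ρ''),
      W ι' * Polynomial.C (1 - Polynomial.C (((blk ι' u).card : ℝ)) * Polynomial.X)
        = W ι' - ∑ b' ∈ insert bu ρ'',
            (if b' ⊆ blk ι' u then
              Polynomial.C (Polynomial.C ((b'.card : ℝ)) * Polynomial.X) * W ι' else 0) := by
    intro ι' hι'
    rw [mem_coars] at hι'
    have hdecomp := blk_card_decomp hρ' hι'.1 hι'.2 hu_s'
    rw [map_sub, map_one, mul_sub, mul_one, hdecomp]
    congr 1
    have h1 : Polynomial.C (∑ b' ∈ insert bu ρ'',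
          if b' ⊆ blk ι' u then (b'.card : ℝ) else 0) * Polynomial.X
        = ∑ b' ∈ insert bu ρ'',
            (if b' ⊆ blk ι' u then Polynomial.C ((b'.card : ℝ)) * Polynomial.X else 0) := by
      rw [map_sum, Finset.sum_mul]
      apply Finset.sum_congr rfl
      intro b' _
      split <;> simp
    rw [h1, map_sum, Finset.mul_sum]
    apply Finset.sum_congr rfl
    intro b' _
    split <;> simp [mul_comm]
  rw [Finset.sum_congr rfl hexp, Finset.sum_sub_distrib]
  congr 1
  rw [Finset.sum_comm, Finset.sum_insert hbu]
  congr 1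
  · rw [← Finset.sum_filter, filter_bu hρ' hu]
    exact (Finset.mul_sum _ _ _).symm
  · apply Finset.sum_congr rfl
    intro b' hb'
    rw [← Finset.sum_filter, filter_merge hρ' hbu hu hb']
    exact (Finset.mul_sum _ _ _).symm

lemma case2 (hv : v ∉ s') (hρ' : PartOf s' ρ') :
    Q (insert v s') (insert {v} ρ') =
      (Polynomial.X - Polynomial.C (Polynomial.C ((s'.card : ℝ)) * Polynomial.X)) * Q s' ρ' := by
  classical
  have hvnotρ' : ∀ ι' ∈ coars s' ρ', ({v} : Finset α) ∉ ι' := by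
    intro ι' hι' h
    exact hv ((mem_coars.1 hι').1.2.1 _ h (Finset.mem_singleton_self v))
  have herasemem : ∀ ι ∈ (coars (insert v s') (insert {v} ρ')).filter
      (fun ι => ({v} : Finset α) ∈ ι), ι.erase {v} ∈ coars s' ρ' := by
    intro ι hι
    rw [Finset.mem_filter] at hι
    obtain ⟨hι1, hvι⟩ := hι
    rw [mem_coars] at hι1 ⊢
    refine ⟨erase_singleton_part hι1.1 hv hvι, ?_⟩
    intro b hb
    obtain ⟨C, hC, hsubC⟩ := hι1.2 b (Finset.mem_insert_of_mem hb)
    refine ⟨C, Finset.mem_erase.2 ⟨?_, hC⟩, hsubC⟩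
    rintro rfl
    have hbne : b ≠ ∅ := fun h => hρ'.1 (h ▸ hb)
    obtain ⟨y, hy⟩ := Finset.nonempty_iff_ne_empty.2 hbne
    have h2 := hsubC hy
    rw [Finset.mem_singleton] at h2
    exact hv (h2 ▸ hρ'.2.1 b hb hy)
  have hI : ∑ ι ∈ (coars (insert v s') (insert {v} ρ')).filter
        (fun ι => ({v} : Finset α) ∈ ι), W ι
      = ∑ ι' ∈ coars s' ρ',
          (Polynomial.X - Polynomial.C (Polynomial.C ((ι'.card : ℝ)))) * W ι' := by
    refine Finset.sum_nbij' (fun ι => ι.erase {v}) (fun ι' => insert {v} ι') herasemem ?_ ?_ ?_ ?_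
    · intro ι' hι'
      have hp := (mem_coars.1 hι').1
      rw [Finset.mem_filter, mem_coars]
      refine ⟨⟨singleton_up_part hp hv, ?_⟩, Finset.mem_insert_self _ _⟩
      intro b hb
      rcases Finset.mem_insert.1 hb with rfl | hb2
      · exact ⟨{v}, Finset.mem_insert_self _ _, Finset.Subset.refl _⟩
      · obtain ⟨C, hC, h⟩ := (mem_coars.1 hι').2 b hb2
        exact ⟨C, Finset.mem_insert_of_mem hC, h⟩
    · intro ι hι
      exact Finset.insert_erase (Finset.mem_filter.1 hι).2
    · intro ι' hι'
      exact Finset.erase_insert (hvnotρ' ι' hι')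
    · intro ι hι
      have h1 : ι = insert {v} (ι.erase {v}) := (Finset.insert_erase (Finset.mem_filter.1 hι).2).symm
      have hp : PartOf s' (ι.erase {v}) := (mem_coars.1 (herasemem ι hι)).1
      conv_lhs => rw [h1]
      exact W_singleton_up hp hv
  have hII : ∑ ι ∈ (coars (insert v s') (insert {v} ρ')).filter
        (fun ι => ({v} : Finset α) ∉ ι), W ι
      = ∑ p ∈ (coars s' ρ').sigma (fun ι' => ι'),
          W p.1 * Polynomial.C (1 - Polynomial.C ((p.2.card : ℝ)) * Polynomial.X) := by
    have hjm : ∀ p ∈ (coars s' ρ').sigma (fun ι' => ι'),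
        insert (insert v p.2) (p.1.erase p.2) ∈ (coars (insert v s') (insert {v} ρ')).filter
          (fun ι => ({v} : Finset α) ∉ ι) := by
      rintro ⟨ι', C₀⟩ hp
      rw [Finset.mem_sigma] at hp
      obtain ⟨hι', hC₀⟩ := hp
      obtain ⟨hpart, href⟩ := mem_coars.1 hι'
      rw [Finset.mem_filter, mem_coars]
      dsimp only at *
      refine ⟨⟨up_part hpart hv hC₀, ?_⟩, ?_⟩
      · intro b hb
        rcases Finset.mem_insert.1 hb with rfl | hb2
        · exact ⟨insert v C₀, Finset.mem_insert_self _ _,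
            Finset.singleton_subset_iff.2 (Finset.mem_insert_self v C₀)⟩
        · obtain ⟨C, hC, hsubC⟩ := href b hb2
          by_cases hCC : C = C₀
          · exact ⟨insert v C₀, Finset.mem_insert_self _ _,
              (hCC ▸ hsubC).trans (Finset.subset_insert _ _)⟩
          · exact ⟨C, Finset.mem_insert_of_mem (Finset.mem_erase.2 ⟨hCC, hC⟩), hsubC⟩
      · intro h
        rcases Finset.mem_insert.1 h with h | h
        · have hC₀ne : C₀ ≠ ∅ := fun hh => hpart.1 (hh ▸ hC₀)
          obtain ⟨y, hy⟩ := Finset.nonempty_iff_ne_empty.2 hC₀ne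
          have : y ∈ ({v} : Finset α) := h ▸ (Finset.mem_insert_of_mem hy)
          rw [Finset.mem_singleton] at this
          exact hv (this ▸ hpart.2.1 C₀ hC₀ hy)
        · exact hv (hpart.2.1 _ (Finset.mem_of_mem_erase h) (Finset.mem_singleton_self v))
    have him : ∀ ι ∈ (coars (insert v s') (insert {v} ρ')).filter
        (fun ι => ({v} : Finset α) ∉ ι),
        (⟨insert ((blk ι v).erase v) (ι.erase (blk ι v)), (blk ι v).erase v⟩ :
          Σ _ : Finset (Finset α), Finset α) ∈ (coars s' ρ').sigma (fun ι' => ι') := by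
      intro ι hι
      rw [Finset.mem_filter] at hι
      obtain ⟨hι1, hvι⟩ := hι
      obtain ⟨hpart, href⟩ := mem_coars.1 hι1
      obtain ⟨hBv, hvBv⟩ := blk_mem hpart (Finset.mem_insert_self v s')
      have hne : blk ι v ≠ {v} := fun h => hvι (h ▸ hBv)
      obtain ⟨hdpart, hnm, hne'⟩ := down_facts hpart hv hne
      rw [Finset.mem_sigma]
      constructor
      · rw [mem_coars]
        refine ⟨hdpart, ?_⟩
        intro b hb
        obtain ⟨C, hC, hsubC⟩ := href b (Finset.mem_insert_of_mem hb)
        have hvb : v ∉ b := fun h => hv (hρ'.2.1 b hb h)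
        by_cases hCC : C = blk ι v
        · exact ⟨(blk ι v).erase v, Finset.mem_insert_self _ _,
            Finset.subset_erase.2 ⟨hCC ▸ hsubC, hvb⟩⟩
        · exact ⟨C, Finset.mem_insert_of_mem (Finset.mem_erase.2 ⟨hCC, hC⟩), hsubC⟩
      · exact Finset.mem_insert_self _ _
    refine (Finset.sum_nbij'
      (fun (p : Σ _ : Finset (Finset α), Finset α) => insert (insert v p.2) (p.1.erase p.2))
      (fun ι => ⟨insert ((blk ι v).erase v) (ι.erase (blk ι v)), (blk ι v).erase v⟩)
      hjm him ?_ ?_ ?_).symm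
    · rintro ⟨ι', C₀⟩ hp
      rw [Finset.mem_sigma] at hp
      obtain ⟨hι', hC₀⟩ := hp
      obtain ⟨hpart, href⟩ := mem_coars.1 hι'
      have hud := up_down hpart hv hC₀
      have hvC₀ : v ∉ C₀ := not_mem_block hpart hv hC₀
      dsimp only
      refine Sigma.ext ?_ (heq_of_eq ?_)
      · exact hud.2
      · dsimp only
        rw [hud.1, Finset.erase_insert hvC₀]
    · intro ι hι
      rw [Finset.mem_filter] at hι
      obtain ⟨hι1, hvι⟩ := hι
      obtain ⟨hpart, href⟩ := mem_coars.1 hι1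
      obtain ⟨hBv, hvBv⟩ := blk_mem hpart (Finset.mem_insert_self v s')
      have hne : blk ι v ≠ {v} := fun h => hvι (h ▸ hBv)
      dsimp only
      exact down_up hpart hv hne
    · rintro ⟨ι', C₀⟩ hp
      rw [Finset.mem_sigma] at hp
      obtain ⟨hι', hC₀⟩ := hp
      obtain ⟨hpart, href⟩ := mem_coars.1 hι'
      dsimp only
      exact (W_up hpart hv hC₀).symm
  rw [Q, ← Finset.sum_filter_add_sum_filter_not (coars (insert v s') (insert {v} ρ'))
    (fun ι => ({v} : Finset α) ∈ ι) W, hI, hII, Finset.sum_sigma]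
  have hinner : ∀ ι' ∈ coars s' ρ',
      (∑ C₀ ∈ ι', W ι' * Polynomial.C (1 - Polynomial.C ((C₀.card : ℝ)) * Polynomial.X))
        = W ι' * Polynomial.C (Polynomial.C ((ι'.card : ℝ))
            - Polynomial.C ((s'.card : ℝ)) * Polynomial.X) := by
    intro ι' hι'
    have hpart := (mem_coars.1 hι').1
    rw [← Finset.mul_sum, ← map_sum]
    congr 2
    rw [Finset.sum_sub_distrib, Finset.sum_const, ← Finset.sum_mul, ← map_sum]
    congr 2
    · rw [nsmul_eq_mul, mul_one]
      simp
    · norm_cast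
      rw [sum_card hpart]
  rw [Finset.sum_congr rfl hinner, ← Finset.sum_add_distrib, Q, Finset.mul_sum]
  apply Finset.sum_congr rfl
  intro ι' _
  simp only [map_sub]
  ring

lemma helper {c : ℝ} {p : Polynomial ℝ} {k e : ℕ} (h : (Polynomial.X : Polynomial ℝ) ^ k ∣ p)
    (he : e ≤ k + 1) :
    (Polynomial.X : Polynomial ℝ) ^ e ∣ Polynomial.C c * Polynomial.X * p := by
  have h1 : (Polynomial.X : Polynomial ℝ) ^ (k + 1) ∣ Polynomial.X * p := by
    rw [pow_succ']
    exact mul_dvd_mul_left Polynomial.X h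
  have h2 : (Polynomial.X : Polynomial ℝ) ^ (k + 1) ∣ Polynomial.C c * Polynomial.X * p := by
    rw [mul_assoc]
    exact Dvd.dvd.mul_left h1 (Polynomial.C c)
  exact dvd_trans (pow_dvd_pow Polynomial.X he) h2

theorem key : ∀ (n : ℕ) (s : Finset α) (ρ : Finset (Finset α)), s.card = n → PartOf s ρ →
    ∀ j : ℕ, (Polynomial.X : Polynomial ℝ) ^ (ρ.card - j) ∣ (Q s ρ).coeff j := by
  intro n
  induction n with
  | zero =>
    intro s ρ hcard hρ j
    have hρe : ρ = ∅ := by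
      rw [Finset.card_eq_zero] at hcard
      subst hcard
      ext b
      simp only [Finset.notMem_empty, iff_false]
      intro hb
      have hbe : b = ∅ := Finset.subset_empty.1 (hρ.2.1 b hb)
      exact hρ.1 (hbe ▸ hb)
    rw [hρe]
    simpa using one_dvd _
  | succ n IH =>
    intro s ρ hcard hρ j
    have hsne : s.Nonempty := by
      rw [← Finset.card_pos, hcard]
      omega
    obtain ⟨v, hv⟩ := hsne
    have hvs' : v ∉ s.erase v := Finset.notMem_erase v s
    have hs'card : (s.erase v).card = n := by
      rw [Finset.card_erase_of_mem hv, hcard]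
      omega
    have hsins : s = insert v (s.erase v) := (Finset.insert_erase hv).symm
    have hρ2 : PartOf (insert v (s.erase v)) ρ := hsins ▸ hρ
    obtain ⟨hB, hvB⟩ := blk_mem hρ hv
    by_cases hb : blk ρ v = {v}
    · -- v is a singleton block of ρ
      have hvρ : ({v} : Finset α) ∈ ρ := hb ▸ hB
      have hρ'p : PartOf (s.erase v) (ρ.erase {v}) := erase_singleton_part hρ2 hvs' hvρ
      have hρeq : insert {v} (ρ.erase {v}) = ρ := Finset.insert_erase hvρ
      have heq := case2 hvs' hρ'p
      rw [hρeq, ← hsins] at heq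
      have hcard' : (ρ.erase {v}).card + 1 = ρ.card := Finset.card_erase_add_one hvρ
      rw [heq, sub_mul, Polynomial.coeff_sub]
      cases j with
      | zero =>
        rw [Polynomial.mul_coeff_zero, Polynomial.coeff_X_zero, zero_mul, zero_sub,
          Polynomial.coeff_C_mul, dvd_neg]
        apply helper (IH (s.erase v) (ρ.erase {v}) hs'card hρ'p 0)
        omega
      | succ k =>
        rw [Polynomial.coeff_X_mul, Polynomial.coeff_C_mul]
        apply dvd_sub
        · exact dvd_trans (pow_dvd_pow Polynomial.X (by omega))
            (IH (s.erase v) (ρ.erase {v}) hs'card hρ'p k)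
        · apply helper (IH (s.erase v) (ρ.erase {v}) hs'card hρ'p (k + 1))
          omega
    · -- v lies in a block of size ≥ 2
      obtain ⟨hρ'p, hnm, hne⟩ := down_facts hρ2 hvs' hb
      obtain ⟨u, hu⟩ := hne
      have huin : u ∈ (blk ρ v).erase v := hu
      have hρeq : insert (insert v ((blk ρ v).erase v)) (ρ.erase (blk ρ v)) = ρ := by
        rw [Finset.insert_erase hvB, Finset.insert_erase hB]
      have heq := case1 hvs' hρ'p hnm hu
      rw [hρeq, ← hsins] at heq
      have hcard1 : (insert ((blk ρ v).erase v) (ρ.erase (blk ρ v))).card = ρ.card := by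
        rw [Finset.card_insert_of_notMem hnm, Finset.card_erase_add_one hB]
      rw [heq, Polynomial.coeff_sub, Polynomial.coeff_add]
      apply dvd_sub
      · have h1 := IH (s.erase v) _ hs'card hρ'p j
        rwa [hcard1] at h1
      · apply dvd_add
        · rw [Polynomial.coeff_C_mul]
          have h1 := IH (s.erase v) _ hs'card hρ'p j
          rw [hcard1] at h1
          exact Dvd.dvd.mul_left h1 _
        · rw [Polynomial.finset_sum_coeff]
          apply Finset.dvd_sum
          intro b' hb'
          rw [Polynomial.coeff_C_mul]
          obtain ⟨hmp, hmnm⟩ := merge_part hρ'p hnm hb' ⟨u, hu⟩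
          have hrρcard : (ρ.erase (blk ρ v)).card + 1 = ρ.card := Finset.card_erase_add_one hB
          have hmcard : (insert (((blk ρ v).erase v) ∪ b') ((ρ.erase (blk ρ v)).erase b')).card
              = ρ.card - 1 := by
            rw [Finset.card_insert_of_notMem hmnm, Finset.card_erase_of_mem hb']
            have hpos : 1 ≤ (ρ.erase (blk ρ v)).card := Finset.card_pos.2 ⟨b', hb'⟩
            omega
          have h1 := IH (s.erase v) _ hs'card hmp j
          rw [hmcard] at h1
          apply helper h1
          omega

lemma ff_coeff_zero (k : ℕ) : (ff (k + 1)).coeff 0 = 0 := by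
  rw [← Polynomial.constantCoeff_apply, ff, map_prod]
  apply Finset.prod_eq_zero (Finset.mem_range.2 (Nat.succ_pos k))
  simp

lemma ff_coeff_one : ∀ k : ℕ, (ff (k + 1)).coeff 1 =
    Polynomial.C ((-1 : ℝ) ^ k * (k.factorial : ℝ)) := by
  intro k
  induction k with
  | zero =>
    rw [show (0 : ℕ) + 1 = 1 from rfl, ff, Finset.prod_range_one]
    simp
  | succ k ih =>
    rw [ff_succ, mul_sub, Polynomial.coeff_sub, Polynomial.coeff_mul_X, Polynomial.coeff_mul_C,
      ff_coeff_zero, ih, zero_sub, ← map_mul, ← map_neg]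
    congr 1
    push_cast [Nat.factorial_succ]
    ring

lemma ff_coeff_one' {k : ℕ} (h : 1 ≤ k) : (ff k).coeff 1 =
    Polynomial.C ((-1 : ℝ) ^ (k - 1) * ((k - 1).factorial : ℝ)) := by
  obtain ⟨k', rfl⟩ : ∃ k', k = k' + 1 := ⟨k - 1, by omega⟩
  simp [ff_coeff_one]

lemma isPartition_iff {β : Type*} [Fintype β] [DecidableEq β] {π : Finset (Finset β)} :
    IsPartition π ↔ PartOf (Finset.univ) π := by
  constructor
  · rintro ⟨h1, h2⟩
    refine ⟨h1, fun C _ => Finset.subset_univ C, ?_, ?_⟩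
    · intro C hC D hD hne
      rw [Finset.disjoint_left]
      intro a haC haD
      obtain ⟨B, hB, hBuniq⟩ := h2 a
      exact hne ((hBuniq C ⟨hC, haC⟩).trans (hBuniq D ⟨hD, haD⟩).symm)
    · intro x _
      obtain ⟨B, hB, _⟩ := h2 x
      exact ⟨B, hB.1, hB.2⟩
  · rintro ⟨h1, h2, h3, h4⟩
    refine ⟨h1, fun x => ?_⟩
    obtain ⟨C, hC, hxC⟩ := h4 x (Finset.mem_univ x)
    refine ⟨C, ⟨hC, hxC⟩, ?_⟩
    rintro D ⟨hD, hxD⟩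
    by_contra hne
    exact (Finset.disjoint_left.1 (h3 D hD C hC hne) hxD) hxC

end S17

theorem stmt17 (m : ℕ) (hm : 1 ≤ m) (ρ : Finset (Finset (Fin m)))
    (hρ : IsPartition ρ) (l : ℕ) (hl : l < ρ.card - 1) :
    (∑ ι ∈ @Finset.filter _ (fun ι => IsPartition ι ∧ Refines ρ ι)
        (Classical.decPred _) Finset.univ,
      Polynomial.C ((-1 : ℝ) ^ (ι.card - 1) * ((ι.card - 1).factorial : ℝ)) *
        ∏ B ∈ ι, ∏ i ∈ Finset.range (B.card - 1),
          (1 - Polynomial.C ((i : ℝ) + 1) * Polynomial.X)).coeff l = 0 := by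
  classical
  have hpart : S17.PartOf (Finset.univ) ρ := S17.isPartition_iff.1 hρ
  have hsets : (@Finset.filter _ (fun ι => IsPartition ι ∧ Refines ρ ι)
      (Classical.decPred _) Finset.univ) = S17.coars Finset.univ ρ := by
    rw [Finset.filter_congr_decidable]
    ext ι
    rw [Finset.mem_filter, S17.mem_coars]
    simp only [Finset.mem_univ, true_and]
    rw [S17.isPartition_iff]
  rw [hsets]
  have hQ : (∑ ι ∈ S17.coars Finset.univ ρ,
      Polynomial.C ((-1 : ℝ) ^ (ι.card - 1) * ((ι.card - 1).factorial : ℝ)) *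
        ∏ B ∈ ι, ∏ i ∈ Finset.range (B.card - 1),
          (1 - Polynomial.C ((i : ℝ) + 1) * Polynomial.X))
      = (S17.Q Finset.univ ρ).coeff 1 := by
    rw [S17.Q, Polynomial.finset_sum_coeff]
    apply Finset.sum_congr rfl
    intro ι hι
    have hι1 : ι.Nonempty := by
      obtain ⟨hpart', _⟩ := S17.mem_coars.1 hι
      obtain ⟨C, hC, _⟩ := hpart'.2.2.2 ⟨0, hm⟩ (Finset.mem_univ _)
      exact ⟨C, hC⟩
    rw [S17.W, Polynomial.coeff_mul_C, S17.ff_coeff_one' (Finset.card_pos.2 hι1)]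
    congr 1
  rw [hQ]
  obtain ⟨h, hh⟩ := S17.key (Finset.univ : Finset (Fin m)).card Finset.univ ρ rfl hpart 1
  rw [hh, mul_comm, Polynomial.coeff_mul_X_pow']
  rw [if_neg]
  omega
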